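/- General one-way proportional covariation optimality: for a strictly positive P ∈ Δ_{n−1} (n ≥ 2), an index v, and a fixed value p̃ ∈ (0,1), among all strictly positive Q ∈ Δ_{n−1} with Q_v = p̃, the I-divergence D(Q||P) is minimized exactly at Q given by Q_v = p̃ and Q_j = P_j(1−p̃)/(1−P_v) for j ≠ v. -/

import Mathlib

/-- I-divergence (Kullback-Leibler divergence) on a finite set. -/
noncomputable def kl {Y : Type*} [Fintype Y] (Q P : Y → ℝ) : ℝ :=
  ∑ y, Q y * Real.log (Q y / P y)

lemma gibbs_le (a b : ℝ) (ha : 0 < a) (hb : 0 < b) : a - b ≤ a * Real.log (a / b) := by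
  have h := Real.log_le_sub_one_of_pos (div_pos hb ha)
  have hlog : Real.log (a / b) = - Real.log (b / a) := by rw [← Real.log_inv, inv_div]
  have hba : a * (b / a) = b := by field_simp
  nlinarith [mul_le_mul_of_nonneg_left h ha.le]

lemma gibbs_lt (a b : ℝ) (ha : 0 < a) (hb : 0 < b) (hne : a ≠ b) :
    a - b < a * Real.log (a / b) := by
  have hne' : b / a ≠ 1 := by
    intro h
    exact hne ((div_eq_one_iff_eq ha.ne').mp h).symm
  have h := Real.log_lt_sub_one_of_pos (div_pos hb ha) hne'
  have hlog : Real.log (a / b) = - Real.log (b / a) := by rw [← Real.log_inv, inv_div]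
  have hba : a * (b / a) = b := by field_simp
  nlinarith [mul_lt_mul_of_pos_left h ha]

theorem stmt9 {n : ℕ} (hn : 2 ≤ n)
    (P : Fin n → ℝ) (hP : ∀ j, 0 < P j) (hPs : ∑ j, P j = 1)
    (v : Fin n) (p : ℝ) (hp0 : 0 < p) (hp1 : p < 1)
    (Qstar : Fin n → ℝ)
    (hQstar : Qstar = fun j => if j = v then p else P j * (1 - p) / (1 - P v)) :
    ∀ Q : Fin n → ℝ, (∀ j, 0 < Q j) → (∑ j, Q j = 1) → Q v = p →
      kl Qstar P ≤ kl Q P ∧ (kl Q P = kl Qstar P → Q = Qstar) := by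
  -- P v < 1
  have hcard : 1 < Fintype.card (Fin n) := by simp; omega
  obtain ⟨w, hw⟩ := Fintype.exists_ne_of_one_lt_card hcard v
  set S : Finset (Fin n) := Finset.univ.erase v with hS
  have hsum_split : ∀ f : Fin n → ℝ, ∑ j ∈ S, f j = (∑ j, f j) - f v := by
    intro f
    have := Finset.sum_erase_add Finset.univ f (Finset.mem_univ v)
    linarith
  have hPS : ∑ j ∈ S, P j = 1 - P v := by rw [hsum_split, hPs]
  have hPv : P v < 1 := by
    have hwS : w ∈ S := Finset.mem_erase.2 ⟨hw, Finset.mem_univ w⟩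
    have : P w ≤ ∑ j ∈ S, P j :=
      Finset.single_le_sum (fun j _ => (hP j).le) hwS
    have := hP w
    linarith
  set c : ℝ := (1 - p) / (1 - P v) with hc
  have hc0 : 0 < c := div_pos (by linarith) (by linarith)
  have hQstarS : ∀ j ∈ S, Qstar j = c * P j := by
    intro j hj
    have hjv : j ≠ v := (Finset.mem_erase.1 hj).1
    rw [hQstar]; simp only [hjv, if_false]; ring
  have hQstarv : Qstar v = p := by rw [hQstar]; simp
  -- key identity
  have key : ∀ Q : Fin n → ℝ, (∀ j, 0 < Q j) → (∑ j, Q j = 1) → Q v = p →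
      kl Q P - kl Qstar P = ∑ j ∈ S, Q j * Real.log (Q j / (c * P j)) := by
    intro Q hQ hQs hQv
    have hQS : ∑ j ∈ S, Q j = 1 - p := by rw [hsum_split, hQs, hQv]
    have h1 : kl Q P = (∑ j ∈ S, Q j * Real.log (Q j / P j)) + p * Real.log (p / P v) := by
      unfold kl
      rw [← Finset.sum_erase_add Finset.univ _ (Finset.mem_univ v), hQv]
    have h2 : kl Qstar P = (∑ j ∈ S, (c * P j) * Real.log c) + p * Real.log (p / P v) := by
      unfold kl
      rw [← Finset.sum_erase_add Finset.univ _ (Finset.mem_univ v), hQstarv]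
      congr 1
      apply Finset.sum_congr rfl
      intro j hj
      rw [hQstarS j hj, mul_div_assoc, div_self (hP j).ne', mul_one]
    have h3 : ∀ j ∈ S, Q j * Real.log (Q j / P j)
        = Q j * Real.log (Q j / (c * P j)) + Q j * Real.log c := by
      intro j hj
      have h4 : (Q j / (c * P j)) * c = Q j / P j := by
        rw [div_mul_eq_mul_div, mul_comm (Q j) c, mul_div_mul_left _ _ hc0.ne']
      rw [← h4, Real.log_mul (div_pos (hQ j) (mul_pos hc0 (hP j))).ne' hc0.ne', mul_add]
    have hcsum : ∑ j ∈ S, c * P j = 1 - p := by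
      rw [← Finset.mul_sum, hPS, hc, div_mul_cancel₀ _ (sub_pos.2 hPv).ne']
    rw [h1, h2, Finset.sum_congr rfl h3, Finset.sum_add_distrib, ← Finset.sum_mul,
      ← Finset.sum_mul, hQS, hcsum]
    ring
  intro Q hQ hQs hQv
  have hQS : ∑ j ∈ S, Q j = 1 - p := by rw [hsum_split, hQs, hQv]
  have hcsum : ∑ j ∈ S, c * P j = 1 - p := by
    rw [← Finset.mul_sum, hPS, hc, div_mul_cancel₀ _ (sub_pos.2 hPv).ne']
  have hge : ∀ j ∈ S, Q j - c * P j ≤ Q j * Real.log (Q j / (c * P j)) := by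
    intro j hj
    exact gibbs_le _ _ (hQ j) (mul_pos hc0 (hP j))
  have hsum0 : ∑ j ∈ S, (Q j - c * P j) = 0 := by
    rw [Finset.sum_sub_distrib, hQS, hcsum]; ring
  have hmain : 0 ≤ ∑ j ∈ S, Q j * Real.log (Q j / (c * P j)) := by
    calc 0 = ∑ j ∈ S, (Q j - c * P j) := hsum0.symm
    _ ≤ _ := Finset.sum_le_sum hge
  have hkey := key Q hQ hQs hQv
  constructor
  · linarith
  · intro heq
    have hz : ∑ j ∈ S, Q j * Real.log (Q j / (c * P j)) = 0 := by linarith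
    have hall : ∀ j ∈ S, Q j = c * P j := by
      by_contra hcon
      push_neg at hcon
      obtain ⟨j0, hj0, hj0ne⟩ := hcon
      have : ∑ j ∈ S, (Q j - c * P j) < ∑ j ∈ S, Q j * Real.log (Q j / (c * P j)) :=
        Finset.sum_lt_sum hge ⟨j0, hj0, gibbs_lt _ _ (hQ j0) (mul_pos hc0 (hP j0)) hj0ne⟩
      rw [hsum0, hz] at this
      exact lt_irrefl 0 this
    funext j
    by_cases hjv : j = v
    · rw [hjv, hQv, hQstarv]
    · have hjS : j ∈ S := Finset.mem_erase.2 ⟨hjv, Finset.mem_univ j⟩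
      rw [hall j hjS, hQstarS j hjS]
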